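/- arXiv:2408.05830 — 2 statements merged into one kernel-verified Lean document; each statement's English description precedes it below -/
import Mathlib

section
/- With μ = β²/4 + 4π²/l² + π², Pr > 0, γ > 0, l > 0, and β > 0, the rescaled Lorenz parameter r of the compressible Lorenz system equals r = (Ra/l²)·(β²+4π²)·(β/(e^β−1))·(1/(μ² + β²·4π²/l² + γβ²·4π²/l))·(1/(π² + 4π²/l² − β²/4)), and setting r = 1 yields the critical Rayleigh number Ra*_β = (l²/(β²+4π²))·((e^β−1)/β)·(μ² + β²·4π²/l² + γβ²·4π²/l)·(π² + 4π²/l² − β²/4). -/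
open Real

set_option maxHeartbeats 4000000 in
/-- The rescaled Lorenz parameter `r = e₅e₂/(e₄e₁)` of the compressible Lorenz system
equals the stated expression in `Ra, β, l, γ`, and `r = 1` holds exactly at the
critical Rayleigh number `Ra*_β`. -/
theorem compressible_lorenz_r_and_critical_Ra
    (β l γ Pr Ra μ e₁ e₂ e₄ e₅ r : ℝ)
    (hβ : 0 < β) (hl : 0 < l) (hγ : 0 < γ) (hPr : 0 < Pr) (hRa : 0 ≤ Ra)
    (hsub : β ^ 2 / 4 < π ^ 2 + 4 * π ^ 2 / l ^ 2)
    (hμ : μ = β ^ 2 / 4 + 4 * π ^ 2 / l ^ 2 + π ^ 2)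
    (he₁ : e₁ = -(4 * π ^ 2 * Pr / (μ * (β ^ 2 + 4 * π ^ 2))) *
      (μ ^ 2 + β ^ 2 * (4 * π ^ 2 / l ^ 2) + γ * β ^ 2 * (4 * π ^ 2 / l)) *
      ((Real.exp β - 1) / β))
    (he₂ : e₂ = 2 * π * Pr * Real.sqrt Ra / (μ * l))
    (he₄ : e₄ = -((β ^ 2 + 4 * π ^ 2) / (4 * π ^ 2)) * (β / (1 - Real.exp (-β))) *
      (π ^ 2 + 4 * π ^ 2 / l ^ 2 - β ^ 2 / 4))
    (he₅ : e₅ = Real.sqrt Ra * ((β ^ 2 + 4 * π ^ 2) / (2 * π * l)) *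
      (β / (1 - Real.exp (-β))))
    (hr : r = e₅ * e₂ / (e₄ * e₁)) :
    r = (Ra / l ^ 2) * (β ^ 2 + 4 * π ^ 2) * (β / (Real.exp β - 1)) *
        (1 / (μ ^ 2 + β ^ 2 * (4 * π ^ 2 / l ^ 2) + γ * β ^ 2 * (4 * π ^ 2 / l))) *
        (1 / (π ^ 2 + 4 * π ^ 2 / l ^ 2 - β ^ 2 / 4)) ∧
    (r = 1 ↔
      Ra = (l ^ 2 / (β ^ 2 + 4 * π ^ 2)) * ((Real.exp β - 1) / β) *
        (μ ^ 2 + β ^ 2 * (4 * π ^ 2 / l ^ 2) + γ * β ^ 2 * (4 * π ^ 2 / l)) *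
        (π ^ 2 + 4 * π ^ 2 / l ^ 2 - β ^ 2 / 4)) := by
  have hπ : (0:ℝ) < π := Real.pi_pos
  have hexp : 0 < Real.exp β - 1 := by
    have := Real.add_one_le_exp β; linarith
  have hem : 0 < 1 - Real.exp (-β) := by
    have : Real.exp (-β) < 1 := Real.exp_lt_one_iff.mpr (by linarith)
    linarith
  have hμpos : 0 < μ := by
    have h1 : 0 < 4 * π ^ 2 / l ^ 2 := by positivity
    rw [hμ]; positivity
  have hS : 0 < π ^ 2 + 4 * π ^ 2 / l ^ 2 - β ^ 2 / 4 := by linarith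
  have hD : 0 < μ ^ 2 + β ^ 2 * (4 * π ^ 2 / l ^ 2) + γ * β ^ 2 * (4 * π ^ 2 / l) := by
    positivity
  have hsq : Real.sqrt Ra ^ 2 = Ra := Real.sq_sqrt hRa
  set A := Real.exp β - 1 with hA
  set B := 1 - Real.exp (-β) with hB
  set D := μ ^ 2 + β ^ 2 * (4 * π ^ 2 / l ^ 2) + γ * β ^ 2 * (4 * π ^ 2 / l) with hDd
  set S := π ^ 2 + 4 * π ^ 2 / l ^ 2 - β ^ 2 / 4 with hSd
  have hK : (0:ℝ) < β ^ 2 + 4 * π ^ 2 := by positivity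
  have h1 : r = (Ra / l ^ 2) * (β ^ 2 + 4 * π ^ 2) * (β / A) * (1 / D) * (1 / S) := by
    rw [hr, he₁, he₂, he₄, he₅]
    have h4 : -((β ^ 2 + 4 * π ^ 2) / (4 * π ^ 2)) * (β / B) * S < 0 := by
      have h : 0 < ((β ^ 2 + 4 * π ^ 2) / (4 * π ^ 2)) * (β / B) * S := by positivity
      linarith [h]
    have h1n : -(4 * π ^ 2 * Pr / (μ * (β ^ 2 + 4 * π ^ 2))) * D * (A / β) < 0 := by
      have h : 0 < (4 * π ^ 2 * Pr / (μ * (β ^ 2 + 4 * π ^ 2))) * D * (A / β) := by positivity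
      linarith [h]
    rw [div_eq_iff (mul_pos_of_neg_of_neg h4 h1n).ne']
    field_simp
    ring_nf
    rw [hsq]
  refine ⟨h1, ?_⟩
  have hC : (0:ℝ) < l ^ 2 / (β ^ 2 + 4 * π ^ 2) * (A / β) * D * S := by positivity
  have h2 : (Ra / l ^ 2) * (β ^ 2 + 4 * π ^ 2) * (β / A) * (1 / D) * (1 / S)
      = Ra / (l ^ 2 / (β ^ 2 + 4 * π ^ 2) * (A / β) * D * S) := by
    field_simp
  rw [h1, h2, div_eq_one_iff_eq hC.ne']
end

section
/- To first order in β, the critical Rayleigh number satisfies Ra*_β = Ra*₀·(1 + β/2) + O(β²); in particular, for all sufficiently small β > 0, Ra*_β > Ra*₀. -/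
open Real Filter Asymptotics

/-- First-order expansion of the critical Rayleigh number in the compressibility
parameter: `Ra*_β = Ra*₀ (1 + β/2) + O(β²)` as `β → 0⁺`, and in particular
`Ra*_β > Ra*₀` for all sufficiently small `β > 0`. -/
theorem critical_Ra_first_order (l γ : ℝ) (hl : 0 < l) (hγ : 0 < γ)
    (Ra : ℝ → ℝ) (Ra₀ : ℝ)
    (hRa : Ra = fun β => (l ^ 2 / (β ^ 2 + 4 * π ^ 2)) * ((Real.exp β - 1) / β) *
      ((π ^ 2 + 4 * π ^ 2 / l ^ 2 + β ^ 2 / 4) ^ 2 +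
        β ^ 2 * (4 * π ^ 2 / l ^ 2) + γ * β ^ 2 * (4 * π ^ 2 / l)) *
      (π ^ 2 + 4 * π ^ 2 / l ^ 2 - β ^ 2 / 4))
    (hRa₀ : Ra₀ = (l ^ 2 / (4 * π ^ 2)) * (π ^ 2 + 4 * π ^ 2 / l ^ 2) ^ 3) :
    (fun β => Ra β - Ra₀ * (1 + β / 2)) =O[nhdsWithin 0 (Set.Ioi 0)]
      (fun β => β ^ 2) ∧
    ∀ᶠ β in nhdsWithin 0 (Set.Ioi 0), Ra₀ < Ra β := by
  have hπ : (0:ℝ) < π := Real.pi_pos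
  set L := nhdsWithin (0:ℝ) (Set.Ioi 0) with hL
  set A : ℝ := π ^ 2 + 4 * π ^ 2 / l ^ 2 with hA
  set φ : ℝ → ℝ := fun t => l ^ 2 / (t + 4 * π ^ 2) *
      ((A + t / 4) ^ 2 + t * (4 * π ^ 2 / l ^ 2) + γ * t * (4 * π ^ 2 / l)) *
      (A - t / 4) with hφ
  have hden : (0:ℝ) + 4 * π ^ 2 ≠ 0 := by positivity
  have hdiff : DifferentiableAt ℝ φ 0 := by
    apply DifferentiableAt.mul
    apply DifferentiableAt.mul
    · exact (differentiableAt_const _).div (by fun_prop) hden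
    · fun_prop
    · fun_prop
  have hsq : Filter.Tendsto (fun β : ℝ => β ^ 2) L (nhds 0) := by
    have : Filter.Tendsto (fun β : ℝ => β ^ 2) (nhds 0) (nhds 0) := by
      have := (continuous_pow 2 (M := ℝ)).tendsto 0
      simpa using this
    exact this.mono_left nhdsWithin_le_nhds
  -- `φ (β²) - φ 0 = O(β²)`
  have h1 : (fun β : ℝ => φ (β ^ 2) - φ 0) =O[L] fun β => β ^ 2 := by
    have := (hdiff.isBigO_sub).comp_tendsto hsq
    simpa [Function.comp_def] using this
  -- `(e^β - 1)/β - (1 + β/2) = O(β²)`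
  have h2 : (fun β : ℝ => (Real.exp β - 1) / β - (1 + β / 2)) =O[L] fun β => β ^ 2 := by
    rw [isBigO_iff]
    refine ⟨1, ?_⟩
    filter_upwards [Ioc_mem_nhdsGT (show (0:ℝ) < 1 by norm_num)] with β hβ
    obtain ⟨hβ0, hβ1⟩ := hβ
    have habs : |β| ≤ 1 := by rw [abs_of_pos hβ0]; exact hβ1
    have hb := Real.exp_bound habs (n := 3) (by norm_num)
    have hsum : ∑ m ∈ Finset.range 3, β ^ m / (Nat.factorial m) = 1 + β + β ^ 2 / 2 := by
      norm_num [Finset.sum_range_succ, Nat.factorial]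
      try ring
    rw [hsum] at hb
    have hb' : |Real.exp β - (1 + β + β ^ 2 / 2)| ≤ |β| ^ 3 := by
      refine hb.trans ?_
      have : ((3:ℕ).succ / ((Nat.factorial 3 : ℝ) * 3)) ≤ 1 := by norm_num [Nat.factorial]
      nlinarith [abs_nonneg β, pow_nonneg (abs_nonneg β) 3]
    have hβne : β ≠ 0 := ne_of_gt hβ0
    have key : (Real.exp β - 1) / β - (1 + β / 2) = (Real.exp β - (1 + β + β ^ 2 / 2)) / β := by
      field_simp
      ring
    rw [key]
    simp only [Real.norm_eq_abs]
    rw [abs_div]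
    rw [div_le_iff₀ (by rwa [abs_pos])]
    calc |Real.exp β - (1 + β + β ^ 2 / 2)| ≤ |β| ^ 3 := hb'
      _ = |β ^ 2| * |β| := by rw [abs_pow]; ring
      _ ≤ 1 * |β ^ 2| * |β| := by ring_nf; exact le_refl _
  have hφcont : Filter.Tendsto (fun β : ℝ => φ (β ^ 2)) L (nhds (φ 0)) :=
    (hdiff.continuousAt.tendsto).comp hsq
  have h3 : (fun β : ℝ => φ (β ^ 2)) =O[L] fun _ => (1:ℝ) := hφcont.isBigO_one ℝ
  have h4 : (fun β : ℝ => 1 + β / 2) =O[L] fun _ => (1:ℝ) := by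
    have : Filter.Tendsto (fun β : ℝ => 1 + β / 2) L (nhds (1 + 0 / 2)) := by
      apply Filter.Tendsto.mono_left _ nhdsWithin_le_nhds
      exact (continuous_const.add (continuous_id.div_const 2)).tendsto 0
    exact this.isBigO_one ℝ
  have hmain : (fun β => Ra β - Ra₀ * (1 + β / 2)) =O[L] fun β => β ^ 2 := by
    have e1 : (fun β : ℝ => φ (β ^ 2) * ((Real.exp β - 1) / β - (1 + β / 2))) =O[L]
        fun β => β ^ 2 := by simpa using h3.mul h2
    have e2 : (fun β : ℝ => (φ (β ^ 2) - φ 0) * (1 + β / 2)) =O[L]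
        fun β => β ^ 2 := by simpa using h1.mul h4
    have hsum := e1.add e2
    have heq : (fun β => Ra β - Ra₀ * (1 + β / 2)) = fun β =>
        φ (β ^ 2) * ((Real.exp β - 1) / β - (1 + β / 2)) +
          (φ (β ^ 2) - φ 0) * (1 + β / 2) := by
      funext β
      simp only [hRa, hRa₀, hφ, hA]
      ring
    rw [heq]
    simpa using hsum
  refine ⟨hmain, ?_⟩
  -- positivity part
  have hRa₀pos : 0 < Ra₀ := by
    rw [hRa₀]; positivity
  have hlittle : (fun β => Ra β - Ra₀ * (1 + β / 2)) =o[L] fun β : ℝ => β := by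
    refine hmain.trans_isLittleO ?_
    have hid : (fun β : ℝ => β) =o[L] fun _ => (1:ℝ) := by
      rw [isLittleO_one_iff]
      exact tendsto_id.mono_left nhdsWithin_le_nhds
    have := (isBigO_refl (fun β : ℝ => β) L).mul_isLittleO hid
    simpa [pow_two] using this
  have hbound := hlittle.def (show (0:ℝ) < Ra₀ / 4 by positivity)
  filter_upwards [hbound, self_mem_nhdsWithin] with β hb (hβ : 0 < β)
  rw [Real.norm_eq_abs, Real.norm_eq_abs, abs_of_pos hβ] at hb
  have h5 : Ra β - Ra₀ * (1 + β / 2) ≥ -(Ra₀ / 4 * β) := neg_le_of_abs_le hb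
  nlinarith [hb, abs_nonneg (Ra β - Ra₀ * (1 + β / 2))]
end
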